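/- Selection lemma for inf-harmonic functions: let D be a plane domain and u an inf-harmonic function on D. Then there exists a sequence (h_n)_{n≥1} of positive harmonic functions on D such that for every m ≥ 1, u = inf_{n≥m} h_n pointwise on D. -/

import Mathlib

open Complex Metric Set Filter
open scoped ENNReal

/-- A real-valued function is harmonic on `D` if near each point of `D`
it is the real part of a holomorphic function. -/
def HarmonicOnSet (f : ℂ → ℝ) (D : Set ℂ) : Prop :=
  ∀ z ∈ D, ∃ ε > 0, Metric.ball z ε ⊆ D ∧
    ∃ F : ℂ → ℂ, DifferentiableOn ℂ F (Metric.ball z ε) ∧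
      ∀ w ∈ Metric.ball z ε, f w = (F w).re

/-- `u` is inf-harmonic on `D`: the pointwise infimum of a nonempty family of
nonnegative harmonic functions on `D`. -/
def InfHarmonicOn (u : ℂ → ℝ) (D : Set ℂ) : Prop :=
  ∃ H : Set (ℂ → ℝ), H.Nonempty ∧
    (∀ h ∈ H, HarmonicOnSet h D) ∧
    (∀ h ∈ H, ∀ z ∈ D, 0 ≤ h z) ∧
    (∀ z ∈ D, u z = sInf ((fun h => h z) '' H))


/-- A holomorphic function with vanishing real part on a ball has zero derivative. -/
lemma deriv_eq_zero_of_re_zero {G : ℂ → ℂ} {c : ℂ} {ε : ℝ}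
    (hG : DifferentiableOn ℂ G (ball c ε))
    (h0 : ∀ w ∈ ball c ε, (G w).re = 0) :
    ∀ z ∈ ball c ε, deriv G z = 0 := by
  intro z hz
  have hzo : ball c ε ∈ nhds z := isOpen_ball.mem_nhds hz
  have hGz : DifferentiableAt ℂ G z := hG.differentiableAt hzo
  have hd : HasDerivAt G (deriv G z) z := hGz.hasDerivAt
  set L := deriv G z with hL
  -- small ball around z inside the given ball
  obtain ⟨ρ, hρ0, hρ⟩ := Metric.mem_nhds_iff.1 hzo
  -- real direction
  have h1 : HasDerivAt (fun w : ℂ => G (z + w)) L 0 := by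
    have hd' : HasDerivAt G L (z + id (0:ℂ)) := by simpa using hd
    simpa [Function.comp_def] using hd'.comp (0 : ℂ) ((hasDerivAt_id (0 : ℂ)).const_add z)
  have h1R : HasDerivAt (fun t : ℝ => G (z + (t : ℂ))) L 0 := by
    exact h1.comp_ofReal
  have h1re : HasDerivAt (fun t : ℝ => (G (z + (t : ℂ))).re) L.re 0 :=
    Complex.reCLM.hasFDerivAt.comp_hasDerivAt 0 h1R
  have hzero1 : (fun t : ℝ => (G (z + (t : ℂ))).re) =ᶠ[nhds (0 : ℝ)] fun _ => 0 := by
    have : ∀ᶠ t : ℝ in nhds 0, z + (t : ℂ) ∈ ball z ρ := by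
      have : Continuous fun t : ℝ => z + (t : ℂ) := by continuity
      have h := this.continuousAt (x := (0 : ℝ))
      have hmem : ball z ρ ∈ nhds (z + ((0 : ℝ) : ℂ)) := by
        simpa using isOpen_ball.mem_nhds (mem_ball_self hρ0)
      exact h hmem
    filter_upwards [this] with t ht
    exact h0 _ (hρ ht)
  have h1re' : HasDerivAt (fun t : ℝ => (G (z + (t : ℂ))).re) L.re 0 := h1re
  have hre0 : L.re = 0 := by
    have hconst : HasDerivAt (fun _ : ℝ => (0 : ℝ)) 0 0 := hasDerivAt_const _ _
    have := (hconst.congr_of_eventuallyEq hzero1).unique h1re'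
    linarith [this]
  -- imaginary direction
  have h2 : HasDerivAt (fun w : ℂ => G (z + w * I)) (L * I) 0 := by
    have hinner : HasDerivAt (fun w : ℂ => z + w * I) I 0 := by
      simpa using ((hasDerivAt_id (0 : ℂ)).mul_const I).const_add z
    have hd' : HasDerivAt G L (z + (0:ℂ) * I) := by simpa using hd
    simpa [Function.comp_def] using hd'.comp (0 : ℂ) hinner
  have h2R : HasDerivAt (fun t : ℝ => G (z + (t : ℂ) * I)) (L * I) 0 := h2.comp_ofReal
  have h2re : HasDerivAt (fun t : ℝ => (G (z + (t : ℂ) * I)).re) (L * I).re 0 :=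
    Complex.reCLM.hasFDerivAt.comp_hasDerivAt 0 h2R
  have hzero2 : (fun t : ℝ => (G (z + (t : ℂ) * I)).re) =ᶠ[nhds (0 : ℝ)] fun _ => 0 := by
    have : ∀ᶠ t : ℝ in nhds 0, z + (t : ℂ) * I ∈ ball z ρ := by
      have : Continuous fun t : ℝ => z + (t : ℂ) * I := by continuity
      have h := this.continuousAt (x := (0 : ℝ))
      have hmem : ball z ρ ∈ nhds (z + ((0 : ℝ) : ℂ) * I) := by
        simpa using isOpen_ball.mem_nhds (mem_ball_self hρ0)
      exact h hmem
    filter_upwards [this] with t ht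
    exact h0 _ (hρ ht)
  have him0 : (L * I).re = 0 := by
    have hconst : HasDerivAt (fun _ : ℝ => (0 : ℝ)) 0 0 := hasDerivAt_const _ _
    have := (hconst.congr_of_eventuallyEq hzero2).unique h2re
    linarith [this]
  have : L.im = 0 := by
    simpa [Complex.mul_re] using him0
  exact Complex.ext hre0 this

/-- A holomorphic function with vanishing derivative on a ball is constant. -/
lemma eq_const_of_deriv_eq_zero_ball {G : ℂ → ℂ} {c : ℂ} {ε : ℝ}
    (hG : DifferentiableOn ℂ G (ball c ε)) (h0 : ∀ z ∈ ball c ε, deriv G z = 0)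
    {x y : ℂ} (hx : x ∈ ball c ε) (hy : y ∈ ball c ε) : G x = G y := by
  apply (convex_ball c ε).is_const_of_fderivWithin_eq_zero hG _ hx hy
  intro z hz
  have hzo : ball c ε ∈ nhds z := isOpen_ball.mem_nhds hz
  have hGz : DifferentiableAt ℂ G z := hG.differentiableAt hzo
  have hfd : HasFDerivAt G (0 : ℂ →L[ℂ] ℂ) z := by
    have := hGz.hasDerivAt
    rw [h0 z hz] at this
    exact hasFDerivAt_iff_hasDerivAt.2 (by simpa using this)
  rw [fderivWithin_of_isOpen isOpen_ball hz]
  exact hfd.fderiv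

/-- adding a constant preserves harmonicity. -/
lemma HarmonicOnSet.add_const {h : ℂ → ℝ} {D : Set ℂ} (hh : HarmonicOnSet h D) (a : ℝ) :
    HarmonicOnSet (fun z => h z + a) D := by
  intro z hz
  obtain ⟨ε, hε, hsub, F, hF, hFre⟩ := hh z hz
  exact ⟨ε, hε, hsub, fun w => F w + (a : ℂ), hF.add_const _, fun w hw => by
    simp [hFre w hw]⟩


/-- A function harmonic on `D` is globally the real part of a holomorphic function
on any closed ball contained in `D`. -/
lemma harmonic_rep_ball {h : ℂ → ℝ} {D : Set ℂ} (hD : IsOpen D) (hh : HarmonicOnSet h D)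
    {c : ℂ} {r : ℝ} (hr : 0 < r) (hsub : closedBall c r ⊆ D) :
    ∃ F : ℂ → ℂ, DifferentiableOn ℂ F (ball c r) ∧ ∀ w ∈ ball c r, h w = (F w).re := by
  classical
  choose! ε hε0 hεD Floc hFd hFre using hh
  -- the globally defined complex derivative
  set g : ℂ → ℂ := fun z => deriv (Floc z) z with hgdef
  have key : ∀ z ∈ D, ∀ w ∈ ball z (ε z), g w = deriv (Floc z) w := by
    intro z hz w hw
    have hwD : w ∈ D := hεD z hz hw
    set ρ : ℝ := min (ε w) (ε z - dist w z) with hρ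
    have hρ0 : 0 < ρ := lt_min (hε0 w hwD) (by simpa [mem_ball] using hw)
    have hsub1 : ball w ρ ⊆ ball w (ε w) := ball_subset_ball (min_le_left _ _)
    have hsub2 : ball w ρ ⊆ ball z (ε z) := by
      intro x hx
      rw [mem_ball] at hx ⊢
      have hx' : dist x w < ε z - dist w z := lt_of_lt_of_le hx (min_le_right _ _)
      linarith [dist_triangle x w z]
    have hdiff : DifferentiableOn ℂ (fun x => Floc z x - Floc w x) (ball w ρ) :=
      ((hFd z hz).mono hsub2).sub ((hFd w hwD).mono hsub1)
    have hre : ∀ x ∈ ball w ρ, ((fun x => Floc z x - Floc w x) x).re = 0 := by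
      intro x hx
      have h1 := hFre z hz x (hsub2 hx)
      have h2 := hFre w hwD x (hsub1 hx)
      simp [Complex.sub_re, ← h1, ← h2]
    have hder0 := deriv_eq_zero_of_re_zero hdiff hre w (mem_ball_self hρ0)
    have hdz : DifferentiableAt ℂ (Floc z) w :=
      (hFd z hz).differentiableAt (isOpen_ball.mem_nhds (hsub2 (mem_ball_self hρ0)))
    have hdw : DifferentiableAt ℂ (Floc w) w :=
      (hFd w hwD).differentiableAt (isOpen_ball.mem_nhds (hsub1 (mem_ball_self hρ0)))
    have hds : deriv (fun x => Floc z x - Floc w x) w = deriv (Floc z) w - deriv (Floc w) w :=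
      deriv_sub hdz hdw
    rw [hds] at hder0
    exact (sub_eq_zero.mp hder0).symm
  -- g is holomorphic on D
  have hgD : DifferentiableOn ℂ g D := by
    intro z hz
    have hball : ball z (ε z) ∈ nhds z := isOpen_ball.mem_nhds (mem_ball_self (hε0 z hz))
    have han : DifferentiableOn ℂ (deriv (Floc z)) (ball z (ε z)) := by
      have := ((hFd z hz).analyticOnNhd isOpen_ball).deriv
      exact this.differentiableOn
    have hEq : g =ᶠ[nhds z] deriv (Floc z) := by
      filter_upwards [hball] with w hw
      exact key z hz w hw
    have : DifferentiableAt ℂ g z := by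
      have hda := han.differentiableAt hball
      exact hda.congr_of_eventuallyEq hEq
    exact this.differentiableWithinAt
  -- power series of g on the closed ball
  set R : NNReal := r.toNNReal with hRdef
  have hRr : (R : ℝ) = r := Real.coe_toNNReal r hr.le
  have hR0 : 0 < R := by
    rw [← NNReal.coe_lt_coe, hRr]; exact hr
  have hgball : DifferentiableOn ℂ g (closedBall c (R : ℝ)) := by
    rw [hRr]; exact hgD.mono hsub
  have hps : HasFPowerSeriesOnBall g (cauchyPowerSeries g c R) c R :=
    hgball.hasFPowerSeriesOnBall hR0
  set p := cauchyPowerSeries g c R with hpdef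
  set a : ℕ → ℂ := fun n => p.coeff n with hadef
  -- the primitive of g
  set F₀ : ℂ → ℂ := fun z => ∑' n : ℕ, ((n : ℂ) + 1)⁻¹ * a n * (z - c) ^ (n + 1) with hF₀def
  have hprim : ∀ z ∈ ball c r, HasDerivAt F₀ (g z) z := by
    intro z hz
    rw [mem_ball] at hz
    set ρ : ℝ := (dist z c + r) / 2 with hρdef
    have hρ1 : dist z c < ρ := by rw [hρdef]; linarith
    have hρ2 : ρ < r := by rw [hρdef]; linarith [dist_nonneg (x := z) (y := c)]
    have hρ0 : 0 < ρ := lt_of_le_of_lt dist_nonneg hρ1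
    have hsum : Summable fun n => ‖a n‖ * ρ ^ n := by
      have hlt : (ρ.toNNReal : ENNReal) < p.radius := by
        refine lt_of_lt_of_le ?_ hps.r_le
        rw [ENNReal.coe_lt_coe, ← NNReal.coe_lt_coe, Real.coe_toNNReal _ hρ0.le, hRr]
        exact hρ2
      have := p.summable_norm_mul_pow hlt
      refine this.congr fun n => ?_
      rw [p.norm_apply_eq_norm_coef, Real.coe_toNNReal _ hρ0.le]
    have hmain := hasDerivAt_tsum_of_isPreconnected hsum isOpen_ball
      (convex_ball c ρ).isPreconnected
      (g := fun n w => ((n : ℂ) + 1)⁻¹ * a n * (w - c) ^ (n + 1))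
      (g' := fun n w => a n * (w - c) ^ n)
      (u := fun n => ‖a n‖ * ρ ^ n)
      (y₀ := c) (y := z) ?_ ?_ (mem_ball_self hρ0) ?_ (by rwa [mem_ball])
    · have hsum_eq : (∑' n : ℕ, a n * (z - c) ^ n) = g z := by
        have hw : z - c ∈ Metric.eball (0 : ℂ) (R : ENNReal) := by
          rw [Metric.mem_eball, edist_zero_right, enorm_eq_nnnorm, ENNReal.coe_lt_coe,
            ← NNReal.coe_lt_coe, coe_nnnorm, hRr, ← dist_eq_norm]
          exact hz
        have hhs := hps.hasSum hw
        simp only [hpdef] at hhs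
        have hco : ∀ n : ℕ, (cauchyPowerSeries g c R) n (fun _ => z - c)
            = a n * (z - c) ^ n := by
          intro n
          rw [FormalMultilinearSeries.apply_eq_pow_smul_coeff, smul_eq_mul]
          rw [mul_comm]
        simp only [hco] at hhs
        have hcz : c + (z - c) = z := by ring
        rw [hcz] at hhs
        exact hhs.tsum_eq
      rw [← hsum_eq]
      exact hmain
    · intro n w hw
      have h1 : HasDerivAt (fun w : ℂ => (w - c) ^ (n + 1))
          ((n + 1 : ℕ) * (w - c) ^ n * 1) w := by
        have := ((hasDerivAt_id w).sub_const c).pow (n + 1)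
        simpa [Pi.pow_def] using this
      have h2 := h1.const_mul (((n : ℂ) + 1)⁻¹ * a n)
      refine h2.congr_deriv ?_
      have hne : ((n : ℂ) + 1) ≠ 0 := Nat.cast_add_one_ne_zero n
      push_cast
      linear_combination (a n * (w - c) ^ n) * (inv_mul_cancel₀ hne)
    · intro n w hw
      rw [mem_ball] at hw
      rw [norm_mul, norm_pow]
      have : ‖w - c‖ ≤ ρ := by
        rw [← dist_eq_norm]; exact hw.le
      exact mul_le_mul_of_nonneg_left (pow_le_pow_left₀ (norm_nonneg _) this n) (norm_nonneg _)
    · apply summable_zero.congr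
      intro n
      simp [zero_pow (Nat.succ_ne_zero n)]
  -- h - Re F₀ is locally constant on the ball, hence constant
  have hF₀diff : DifferentiableOn ℂ F₀ (ball c r) := fun z hz =>
    ((hprim z hz).differentiableAt).differentiableWithinAt
  set φ : ℂ → ℝ := fun w => h w - (F₀ w).re with hφdef
  have hloc : ∀ z ∈ ball c r, ∀ᶠ w in nhds z, φ w = φ z := by
    intro z hz
    have hzD : z ∈ D := hsub (ball_subset_closedBall hz)
    set ρ : ℝ := min (ε z) (r - dist z c) with hρdef
    have hρ0 : 0 < ρ := lt_min (hε0 z hzD) (by rw [mem_ball] at hz; linarith)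
    have hsub1 : ball z ρ ⊆ ball z (ε z) := ball_subset_ball (min_le_left _ _)
    have hsub2 : ball z ρ ⊆ ball c r := by
      intro x hx; rw [mem_ball] at hx ⊢
      have hx' := lt_of_lt_of_le hx (min_le_right _ _)
      linarith [dist_triangle x z c]
    have hdGd : DifferentiableOn ℂ (fun x => Floc z x - F₀ x) (ball z ρ) :=
      ((hFd z hzD).mono hsub1).sub (hF₀diff.mono hsub2)
    have hder : ∀ x ∈ ball z ρ, deriv (fun x => Floc z x - F₀ x) x = 0 := by
      intro x hx
      have hd1 : DifferentiableAt ℂ (Floc z) x :=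
        (hFd z hzD).differentiableAt (isOpen_ball.mem_nhds (hsub1 hx))
      have hd2 : HasDerivAt F₀ (g x) x := hprim x (hsub2 hx)
      rw [deriv_fun_sub hd1 hd2.differentiableAt, hd2.deriv, ← key z hzD x (hsub1 hx), sub_self]
    filter_upwards [isOpen_ball.mem_nhds (mem_ball_self hρ0)] with x hx
    have hcst := eq_const_of_deriv_eq_zero_ball hdGd hder hx (mem_ball_self hρ0)
    have h1 := hFre z hzD x (hsub1 hx)
    have h2 := hFre z hzD z (mem_ball_self (hε0 z hzD))
    have hre : (Floc z x - F₀ x).re = (Floc z z - F₀ z).re := by rw [hcst]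
    simp only [Complex.sub_re] at hre
    simp only [hφdef]
    rw [h1, h2]
    linarith
  have hφ0 : ∀ z ∈ ball c r, HasFDerivAt φ (0 : ℂ →L[ℝ] ℝ) z := by
    intro z hz
    have hc' : HasFDerivAt (fun _ : ℂ => φ z) (0 : ℂ →L[ℝ] ℝ) z := hasFDerivAt_const _ _
    apply hc'.congr_of_eventuallyEq
    filter_upwards [hloc z hz] with w hw
    exact hw
  have hφconst : ∀ w ∈ ball c r, φ w = φ c := by
    intro w hw
    refine (convex_ball c r).is_const_of_fderivWithin_eq_zero
      (fun z hz => (hφ0 z hz).differentiableAt.differentiableWithinAt) ?_ hw (mem_ball_self hr)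
    intro z hz
    rw [fderivWithin_of_isOpen isOpen_ball hz]
    exact (hφ0 z hz).fderiv
  refine ⟨fun w => F₀ w + ((h c - (F₀ c).re : ℝ) : ℂ), hF₀diff.add_const _, ?_⟩
  intro w hw
  have := hφconst w hw
  simp only [hφdef] at this
  simp [Complex.add_re, Complex.ofReal_re]
  linarith


/-- Harnack inequality for positive harmonic functions, cross-multiplied form. -/
lemma harnack_ball {h : ℂ → ℝ} {D : Set ℂ} (hD : IsOpen D) (hh : HarmonicOnSet h D)
    {s : ℂ} {r : ℝ} (hr : 0 < r) (hsub : closedBall s r ⊆ D)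
    (hpos : ∀ w ∈ ball s r, 0 < h w) {z : ℂ} (hz : z ∈ ball s r) :
    (r - dist z s) * h z ≤ (r + dist z s) * h s ∧
      (r - dist z s) * h s ≤ (r + dist z s) * h z := by
  obtain ⟨F, hFd, hFre⟩ := harmonic_rep_ball hD hh hr hsub
  set d : ℝ := dist z s with hddef
  have hd0 : 0 ≤ d := dist_nonneg
  have hdr : d < r := by rwa [mem_ball] at hz
  set a : ℂ := F s with hadef
  have hsmem : s ∈ ball s r := mem_ball_self hr
  have hα : (0 : ℝ) < a.re := by rw [hadef, ← hFre s hsmem]; exact hpos s hsmem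
  have hden : ∀ w ∈ ball s r, (F w + (starRingEnd ℂ) a) ≠ 0 := by
    intro w hw
    have : (F w + (starRingEnd ℂ) a).re = h w + a.re := by
      simp [Complex.add_re, Complex.conj_re, ← hFre w hw]
    intro hcontra
    rw [hcontra] at this
    simp at this
    have := hpos w hw
    linarith
  set ψ : ℂ → ℂ := fun w => (F w - a) / (F w + (starRingEnd ℂ) a) with hψdef
  have hψd : DifferentiableOn ℂ ψ (ball s r) :=
    (hFd.sub_const a).div (hFd.add_const _) hden
  have hψs : ψ s = 0 := by simp [hψdef, hadef]
  have hmaps : MapsTo ψ (ball s r) (ball (ψ s) 1) := by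
    intro w hw
    rw [hψs, mem_ball, dist_zero_right]
    have hnum : Complex.normSq (F w - a) < Complex.normSq (F w + (starRingEnd ℂ) a) := by
      simp only [Complex.normSq_apply, Complex.sub_re, Complex.sub_im, Complex.add_re,
        Complex.add_im, Complex.conj_re, Complex.conj_im]
      have hwre : (F w).re = h w := (hFre w hw).symm
      nlinarith [hpos w hw, hα, hwre]
    have habs : ‖F w - a‖ < ‖F w + (starRingEnd ℂ) a‖ := by
      rw [Complex.norm_def, Complex.norm_def]
      exact Real.sqrt_lt_sqrt (Complex.normSq_nonneg _) hnum
    rw [hψdef]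
    simp only [norm_div]
    rw [div_lt_one (lt_of_le_of_lt (norm_nonneg _) habs)]
    exact habs
  have hSchwarz := Complex.dist_le_div_mul_dist_of_mapsTo_ball hψd (hmaps.mono_right ball_subset_closedBall) hz
  -- |ψ z| ≤ d / r
  have hψz : ‖ψ z‖ ≤ d / r := by
    have h' : ‖ψ z‖ ≤ 1 / r * dist z s := by rwa [hψs, dist_zero_right] at hSchwarz
    have he : (1 : ℝ) / r * dist z s = d / r := by rw [hddef]; ring
    rw [← he]
    simpa using h'
  -- cross-multiplied bound on numerator and denominator
  have hzb : z ∈ ball s r := hz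
  have hkey : r * ‖F z - a‖ ≤ d * ‖F z + (starRingEnd ℂ) a‖ := by
    have h1 : ‖ψ z‖ * ‖F z + (starRingEnd ℂ) a‖
        ≤ (d / r) * ‖F z + (starRingEnd ℂ) a‖ :=
      mul_le_mul_of_nonneg_right hψz (norm_nonneg _)
    have h2 : ‖ψ z‖ * ‖F z + (starRingEnd ℂ) a‖
        = ‖F z - a‖ := by
      rw [hψdef]
      simp only [norm_div]
      field_simp [norm_ne_zero_iff.mpr (hden z hzb)]
    rw [h2] at h1
    rw [mul_comm]
    calc ‖F z - a‖ * r ≤ (d / r) * ‖F z + (starRingEnd ℂ) a‖ * r :=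
          mul_le_mul_of_nonneg_right h1 hr.le
      _ = d * ‖F z + (starRingEnd ℂ) a‖ := by field_simp
  -- square it
  have hsq : r ^ 2 * Complex.normSq (F z - a) ≤ d ^ 2 * Complex.normSq (F z + (starRingEnd ℂ) a) := by
    have h1 : (r * ‖F z - a‖) ^ 2 ≤ (d * ‖F z + (starRingEnd ℂ) a‖) ^ 2 := by
      apply sq_le_sq' _ hkey
      have : 0 ≤ d * ‖F z + (starRingEnd ℂ) a‖ :=
        mul_nonneg hd0 (norm_nonneg _)
      nlinarith [mul_nonneg hr.le (norm_nonneg (F z - a))]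
    calc r ^ 2 * Complex.normSq (F z - a) = (r * ‖F z - a‖) ^ 2 := by
          rw [mul_pow, Complex.sq_norm]
      _ ≤ (d * ‖F z + (starRingEnd ℂ) a‖) ^ 2 := h1
      _ = d ^ 2 * Complex.normSq (F z + (starRingEnd ℂ) a) := by rw [mul_pow, Complex.sq_norm]
  -- unpack real and imaginary parts
  set x : ℝ := h z with hxdef
  have hx : 0 < x := hpos z hzb
  have hFzre : (F z).re = x := (hFre z hzb).symm
  set β : ℝ := (F z).im - a.im with hβdef
  have hexp : r ^ 2 * ((x - a.re) ^ 2 + β ^ 2) ≤ d ^ 2 * ((x + a.re) ^ 2 + β ^ 2) := by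
    have e1 : Complex.normSq (F z - a) = (x - a.re) ^ 2 + β ^ 2 := by
      simp [Complex.normSq_apply, Complex.sub_re, Complex.sub_im, hFzre, hβdef]
      ring
    have e2 : Complex.normSq (F z + (starRingEnd ℂ) a) = (x + a.re) ^ 2 + β ^ 2 := by
      simp [Complex.normSq_apply, Complex.add_re, Complex.add_im, Complex.conj_re,
        Complex.conj_im, hFzre, hβdef]
      ring
    rw [← e1, ← e2]
    exact hsq
  have hhs : h s = a.re := by rw [hadef, hFre s hsmem]
  rw [hhs]
  have hd2r : d ^ 2 ≤ r ^ 2 := by nlinarith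
  have hA2 : (r * (x - a.re)) ^ 2 ≤ (d * (x + a.re)) ^ 2 := by
    nlinarith [hexp, mul_nonneg (sub_nonneg.mpr hd2r) (sq_nonneg β)]
  have hB : 0 ≤ d * (x + a.re) := mul_nonneg hd0 (by linarith)
  have habsA : |r * (x - a.re)| ≤ d * (x + a.re) := by
    calc |r * (x - a.re)| = Real.sqrt ((r * (x - a.re)) ^ 2) := (Real.sqrt_sq_eq_abs _).symm
      _ ≤ Real.sqrt ((d * (x + a.re)) ^ 2) := Real.sqrt_le_sqrt hA2
      _ = d * (x + a.re) := by rw [Real.sqrt_sq_eq_abs, _root_.abs_of_nonneg hB]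
  have h1 : r * (x - a.re) ≤ d * (x + a.re) := le_trans (le_abs_self _) habsA
  have h2 : -(d * (x + a.re)) ≤ r * (x - a.re) := neg_le_of_abs_le habsA
  constructor
  · linarith [h1, mul_comm r x]
  · linarith [h2]





set_option maxHeartbeats 2000000 in
theorem infHarmonic_selection (D : Set ℂ) (hD : IsOpen D) (hDc : IsConnected D)
    (u : ℂ → ℝ) (hu : InfHarmonicOn u D) :
    ∃ h : ℕ → ℂ → ℝ, (∀ n, HarmonicOnSet (h n) D) ∧ (∀ n, ∀ z ∈ D, 0 < h n z) ∧
      ∀ m : ℕ, ∀ z ∈ D, u z = sInf ((fun n => h n z) '' {n : ℕ | m ≤ n}) := by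
  classical
  obtain ⟨H, hHne, hHharm, hHpos, huinf⟩ := hu
  have hne_im : ∀ z : ℂ, ((fun f => f z) '' H).Nonempty := fun z => hHne.image _
  have hbdd : ∀ z ∈ D, BddBelow ((fun f => f z) '' H) := by
    intro z hz
    exact ⟨0, fun y hy => by obtain ⟨f, hf, rfl⟩ := hy; exact hHpos f hf z hz⟩
  have hu_le : ∀ f ∈ H, ∀ z ∈ D, u z ≤ f z := by
    intro f hf z hz
    rw [huinf z hz]
    exact csInf_le (hbdd z hz) ⟨f, hf, rfl⟩
  have hu_nonneg : ∀ z ∈ D, 0 ≤ u z := by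
    intro z hz
    rw [huinf z hz]
    apply le_csInf (hne_im z)
    rintro y ⟨f, hf, rfl⟩
    exact hHpos f hf z hz
  obtain ⟨T, hTc, hTd⟩ := TopologicalSpace.exists_countable_dense ℂ
  have hDne : D.Nonempty := hDc.nonempty
  have hSne : (D ∩ T).Nonempty := by
    obtain ⟨z, hz⟩ := hDne
    obtain ⟨ρ, hρ0, hρ⟩ := Metric.isOpen_iff.1 hD z hz
    obtain ⟨t, htT, htb⟩ := hTd.exists_mem_open isOpen_ball ⟨z, mem_ball_self hρ0⟩
    exact ⟨t, hρ htb, htT⟩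
  obtain ⟨σ, hσ⟩ := Set.Countable.exists_eq_range
    (Set.Countable.mono inter_subset_right hTc) hSne
  have hσD : ∀ i, σ i ∈ D := by
    intro i
    have hm : σ i ∈ D ∩ T := by rw [hσ]; exact mem_range_self i
    exact hm.1
  have sel : ∀ i k : ℕ, ∃ f, f ∈ H ∧ f (σ i) < u (σ i) + 1 / ((k : ℝ) + 1) := by
    intro i k
    have hpos : (0 : ℝ) < 1 / ((k : ℝ) + 1) := by positivity
    obtain ⟨y, hy, hylt⟩ := Real.lt_sInf_add_pos (hne_im (σ i)) hpos
    obtain ⟨f, hf, rfl⟩ := hy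
    exact ⟨f, hf, by rw [huinf _ (hσD i)]; exact hylt⟩
  choose G hGH hGlt using sel
  refine ⟨fun n w => G n.unpair.1 n.unpair.2 w + 1 / ((n.unpair.2 : ℝ) + 1), ?_, ?_, ?_⟩
  · exact fun n => (hHharm _ (hGH n.unpair.1 n.unpair.2)).add_const _
  · intro n z hz
    have h1 := hHpos _ (hGH n.unpair.1 n.unpair.2) z hz
    have h2 : (0 : ℝ) < 1 / ((n.unpair.2 : ℝ) + 1) := by positivity
    linarith
  intro m z hz
  have hlow : ∀ y ∈ (fun n => G n.unpair.1 n.unpair.2 z + 1 / ((n.unpair.2 : ℝ) + 1)) ''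
      {n : ℕ | m ≤ n}, u z ≤ y := by
    rintro y ⟨n, _, rfl⟩
    have h1 := hu_le _ (hGH n.unpair.1 n.unpair.2) z hz
    have h2 : (0 : ℝ) < 1 / ((n.unpair.2 : ℝ) + 1) := by positivity
    simp only
    linarith
  have hbdd' : BddBelow ((fun n => G n.unpair.1 n.unpair.2 z + 1 / ((n.unpair.2 : ℝ) + 1)) ''
      {n : ℕ | m ≤ n}) := ⟨u z, hlow⟩
  have hne' : ((fun n => G n.unpair.1 n.unpair.2 z + 1 / ((n.unpair.2 : ℝ) + 1)) ''
      {n : ℕ | m ≤ n}).Nonempty := ⟨_, ⟨m, by simp, rfl⟩⟩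
  have key : ∀ ε > 0, ∃ n, m ≤ n ∧
      G n.unpair.1 n.unpair.2 z + 1 / ((n.unpair.2 : ℝ) + 1) ≤ u z + ε := by
    intro ε hε
    obtain ⟨ρ, hρ0, hρD⟩ := Metric.isOpen_iff.1 hD z hz
    set r' : ℝ := ρ / 2 with hr'def
    have hr'0 : 0 < r' := by positivity
    have hr'D : closedBall z r' ⊆ D := fun x hx =>
      hρD (mem_ball.2 (lt_of_le_of_lt (mem_closedBall.1 hx) (by rw [hr'def]; linarith)))
    set M : ℝ := u z with hMdef
    have hM0 : 0 ≤ M := hu_nonneg z hz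
    set η : ℝ := min 1 (ε / (3 * M + 4)) with hηdef
    have h34 : (0 : ℝ) < 3 * M + 4 := by linarith
    have hη0 : 0 < η := lt_min one_pos (by positivity)
    have hη1 : η ≤ 1 := min_le_left _ _
    have hηε : η * (3 * M + 4) ≤ ε := by
      have hm := min_le_right 1 (ε / (3 * M + 4))
      calc η * (3 * M + 4) ≤ (ε / (3 * M + 4)) * (3 * M + 4) :=
            mul_le_mul_of_nonneg_right hm h34.le
        _ = ε := by field_simp
    set r : ℝ := r' / 2 with hrdef
    have hr0 : 0 < r := by positivity
    set dmin : ℝ := min (η * r / 3) r' with hdmindef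
    have hdmin0 : 0 < dmin := lt_min (by positivity) hr'0
    obtain ⟨s, hsT, hsb⟩ := hTd.exists_mem_open isOpen_ball ⟨z, mem_ball_self hdmin0⟩
    have hsz : dist s z < dmin := mem_ball.1 hsb
    have hsD : s ∈ D := hr'D (mem_closedBall.2 (le_trans hsz.le (min_le_right _ _)))
    have hsr : s ∈ range σ := by rw [← hσ]; exact ⟨hsD, hsT⟩
    obtain ⟨i, hi⟩ := hsr
    subst hi
    obtain ⟨k₀, hk₀⟩ := exists_nat_one_div_lt hη0
    set k : ℕ := max k₀ m with hkdef
    have hk1 : (1 : ℝ) / ((k : ℝ) + 1) ≤ η := by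
      refine le_trans ?_ hk₀.le
      apply one_div_le_one_div_of_le (by positivity)
      have : (k₀ : ℝ) ≤ (k : ℝ) := by exact_mod_cast le_max_left k₀ m
      linarith
    refine ⟨Nat.pair i k, le_trans (le_max_right k₀ m) (Nat.right_le_pair i k), ?_⟩
    rw [Nat.unpair_pair]
    simp only
    set f : ℂ → ℝ := G i k with hfdef
    have hfH : f ∈ H := hGH i k
    set δ : ℝ := 1 / ((k : ℝ) + 1) with hδdef
    have hδ0 : 0 < δ := by positivity
    have hδη : δ ≤ η := hk1
    set d : ℝ := dist z (σ i) with hddef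
    have hd0 : 0 ≤ d := dist_nonneg
    have hdlt : d < η * r / 3 := by
      rw [hddef, dist_comm]
      exact lt_of_lt_of_le hsz (min_le_left _ _)
    have hηr : η * r ≤ r := mul_le_of_le_one_left hr0.le hη1
    have hdr : d < r := by linarith
    have hsubs : closedBall (σ i) r ⊆ D := by
      intro x hx
      apply hr'D
      rw [mem_closedBall] at hx ⊢
      have htri := dist_triangle x (σ i) z
      have hd2 : dist (σ i) z ≤ r := by rw [dist_comm]; linarith
      have hreq : r = r' / 2 := hrdef
      linarith
    -- Harnack step 1 : at center σ i for f + δ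
    have hpos_ball1 : ∀ w ∈ ball (σ i) r, 0 < f w + δ := fun w hw => by
      have := hHpos f hfH w (hsubs (ball_subset_closedBall hw)); linarith
    have hzball : z ∈ ball (σ i) r := mem_ball.2 hdr
    have hHk1 := (harnack_ball hD ((hHharm f hfH).add_const δ) hr0 hsubs hpos_ball1 hzball).1
    rw [← hddef] at hHk1
    have hrd : 0 < r - d := by linarith
    have hfs_pos : 0 < f (σ i) + δ := hpos_ball1 _ (mem_ball_self hr0)
    have hstep1 : f z + δ ≤ (1 + η) * (f (σ i) + δ) := by
      have h2 : (r + d) * (f (σ i) + δ) ≤ ((1 + η) * (r - d)) * (f (σ i) + δ) := by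
        apply mul_le_mul_of_nonneg_right _ hfs_pos.le
        have : η * d ≤ d := mul_le_of_le_one_left hd0 hη1
        nlinarith [hdlt]
      have h3 : (r - d) * (f z + δ) ≤ ((1 + η) * (r - d)) * (f (σ i) + δ) :=
        le_trans hHk1 h2
      have h4 : (r - d) * (f z + δ) ≤ (r - d) * ((1 + η) * (f (σ i) + δ)) := by
        rw [show (r - d) * ((1 + η) * (f (σ i) + δ)) = ((1 + η) * (r - d)) * (f (σ i) + δ) by ring]
        exact h3
      exact le_of_mul_le_mul_left (by linarith [h4]) hrd
    -- Harnack step 2 : u (σ i) ≤ (1 + η) * u z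
    have hstep2 : u (σ i) ≤ (1 + η) * M := by
      have hkey2 : ∀ f' ∈ H, u (σ i) ≤ (1 + η) * f' z := by
        intro f' hf'
        have hstep : ∀ δ' > (0:ℝ), u (σ i) ≤ (1 + η) * f' z + 2 * δ' := by
          intro δ' hδ'
          have hpos_ball2 : ∀ w ∈ ball z r', 0 < f' w + δ' := fun w hw => by
            have := hHpos f' hf' w (hr'D (ball_subset_closedBall hw)); linarith
          have hsball : σ i ∈ ball z r' := by
            rw [mem_ball]
            exact lt_of_lt_of_le hsz (min_le_right _ _)
          have hH2 := (harnack_ball hD ((hHharm f' hf').add_const δ') hr'0 hr'D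
            hpos_ball2 hsball).1
          -- (r' - dist (σ i) z) * (f' (σ i) + δ') ≤ (r' + dist (σ i) z) * (f' z + δ')
          set d' : ℝ := dist (σ i) z with hd'def
          have hd'0 : 0 ≤ d' := dist_nonneg
          have hd'lt : d' < η * r / 3 := lt_of_lt_of_le hsz (min_le_left _ _)
          have hrr' : r ≤ r' := by rw [hrdef]; linarith
          have hd'r' : 3 * d' ≤ η * r' := by
            have : η * r ≤ η * r' := mul_le_mul_of_nonneg_left hrr' hη0.le
            linarith
          have hr'd : 0 < r' - d' := by nlinarith
          have hstep' : f' (σ i) + δ' ≤ (1 + η) * (f' z + δ') := by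
            have h2 : (r' + d') * (f' z + δ') ≤ ((1 + η) * (r' - d')) * (f' z + δ') := by
              apply mul_le_mul_of_nonneg_right _ (hpos_ball2 z (mem_ball_self hr'0)).le
              have : η * d' ≤ d' := mul_le_of_le_one_left hd'0 hη1
              nlinarith
            have h3 := le_trans hH2 h2
            have h4 : (r' - d') * (f' (σ i) + δ') ≤ (r' - d') * ((1 + η) * (f' z + δ')) := by
              rw [show (r' - d') * ((1 + η) * (f' z + δ')) =
                ((1 + η) * (r' - d')) * (f' z + δ') by ring]
              exact h3
            exact le_of_mul_le_mul_left (by linarith [h4]) hr'd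
          have hus : u (σ i) ≤ f' (σ i) := hu_le f' hf' _ (hσD i)
          nlinarith [hstep', mul_nonneg (by linarith : (0:ℝ) ≤ 1 - η) hδ'.le]
        refine le_of_forall_pos_le_add ?_
        intro ε' hε'
        have := hstep (ε' / 2) (by positivity)
        linarith
      have h1η : (0:ℝ) < 1 + η := by linarith
      have hdiv : u (σ i) / (1 + η) ≤ u z := by
        rw [huinf z hz]
        apply le_csInf (hne_im z)
        rintro y ⟨f', hf', rfl⟩
        rw [div_le_iff₀ h1η]
        have := hkey2 f' hf'
        linarith
      rw [hMdef]
      calc u (σ i) = (u (σ i) / (1 + η)) * (1 + η) := by field_simp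
        _ ≤ u z * (1 + η) := mul_le_mul_of_nonneg_right hdiv h1η.le
        _ = (1 + η) * u z := mul_comm _ _
    have hGs : f (σ i) < u (σ i) + δ := hGlt i k
    have hfinal : f z + δ ≤ (1 + η) * ((1 + η) * M + 2 * δ) := by
      have h3 : f (σ i) + δ ≤ u (σ i) + 2 * δ := by linarith
      calc f z + δ ≤ (1 + η) * (f (σ i) + δ) := hstep1
        _ ≤ (1 + η) * (u (σ i) + 2 * δ) := mul_le_mul_of_nonneg_left h3 (by linarith)
        _ ≤ (1 + η) * ((1 + η) * M + 2 * δ) :=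
            mul_le_mul_of_nonneg_left (by linarith) (by linarith)
    have hbound : (1 + η) * ((1 + η) * M + 2 * δ) ≤ M + ε := by
      nlinarith [hηε, hM0, hη1, hδη, hδ0.le, hη0.le, mul_nonneg hη0.le hM0, sq_nonneg η]
    rw [hMdef] at hfinal hbound
    linarith
  refine le_antisymm (le_csInf hne' hlow) ?_
  refine le_of_forall_pos_le_add ?_
  intro ε hε
  obtain ⟨n, hn, hle⟩ := key ε hε
  exact le_trans (csInf_le hbdd' ⟨n, hn, rfl⟩) hle
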